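/- Let n ≥ 1, 0 ≤ t < 1, and a > 0. Define ρ₋(x) := ‖x‖ − t·xₙ on ℝⁿ (Euclidean norm minus t times the last coordinate), and let ωₙ denote the Lebesgue measure of the Euclidean unit ball in ℝⁿ. Then the Lebesgue measure of the backward metric ball {x ∈ ℝⁿ : ρ₋(x) < a} equals ωₙ·aⁿ·(1−t²)^{−(n+1)/2}. -/

import Mathlib

open MeasureTheory

noncomputable def diagMap (n : ℕ) (c : Fin n → ℝ) :
    EuclideanSpace ℝ (Fin n) →ₗ[ℝ] EuclideanSpace ℝ (Fin n) :=
  (WithLp.linearEquiv 2 ℝ (Fin n → ℝ)).symm.toLinearMap ∘ₗ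
    Matrix.toLin' (Matrix.diagonal c) ∘ₗ (WithLp.linearEquiv 2 ℝ (Fin n → ℝ)).toLinearMap

lemma diagMap_det (n : ℕ) (c : Fin n → ℝ) : LinearMap.det (diagMap n c) = ∏ i, c i := by
  have : diagMap n c = ((WithLp.linearEquiv 2 ℝ (Fin n → ℝ)).symm : (Fin n → ℝ) →ₗ[ℝ] _) ∘ₗ
      Matrix.toLin' (Matrix.diagonal c) ∘ₗ
        (((WithLp.linearEquiv 2 ℝ (Fin n → ℝ)).symm).symm : _ →ₗ[ℝ] (Fin n → ℝ)) := rfl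
  rw [this, LinearMap.det_conj, LinearMap.det_toLin', Matrix.det_diagonal]

lemma diagMap_apply (n : ℕ) (c : Fin n → ℝ) (x : EuclideanSpace ℝ (Fin n)) (i : Fin n) :
    diagMap n c x i = c i * x i := by
  simp [diagMap, Matrix.toLin'_apply, Matrix.mulVec_diagonal]

lemma vol_image_add (n : ℕ) (v : EuclideanSpace ℝ (Fin n)) (s : Set (EuclideanSpace ℝ (Fin n))) :
    volume ((fun x => x + v) '' s) = volume s := by
  have h : (fun x => x + v) '' s = ((-v) + ·) ⁻¹' s := by
    ext x
    constructor
    · rintro ⟨y, hy, rfl⟩; simpa using hy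
    · intro hx; exact ⟨-v + x, hx, by simp⟩
  rw [h]
  simpa [vadd_eq_add] using measure_preimage_vadd volume (-v) s

lemma aux_key (t a z A : ℝ) (ht0 : 0 ≤ t) (ht1 : t < 1) (ha : 0 < a) (hA : 0 ≤ A) :
    Real.sqrt (z^2 + A) < a + t*z ↔
      ((z - a*t/(1-t^2))*((1-t^2)/a))^2 + A * ((1-t^2)/a^2) < 1 := by
  have hs : 0 < 1 - t^2 := by nlinarith
  have h2 : ((z - a*t/(1-t^2))*((1-t^2)/a))^2 + A*((1-t^2)/a^2)
      = (((1-t^2)*z - a*t)^2 + A*(1-t^2))/a^2 := by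
    field_simp
  rw [h2, div_lt_one (by positivity)]
  by_cases hpos : 0 < a + t*z
  · rw [Real.sqrt_lt' hpos]
    constructor
    · intro h; nlinarith [mul_pos hs (sub_pos.mpr h)]
    · intro h; nlinarith [hs, h]
  · push_neg at hpos
    constructor
    · intro h; linarith [Real.sqrt_nonneg (z^2+A)]
    · intro h
      exfalso
      have hw : 0 ≤ -(a+t*z) := by linarith
      nlinarith [mul_nonneg (mul_nonneg ha.le hw) hs.le, sq_nonneg ((-(a+t*z))*(1-t^2)),
        mul_pos (mul_pos ha ha) hs, mul_nonneg (mul_nonneg (mul_nonneg ht0 ht0) hA) hs.le,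
        sq_nonneg ((1-t^2)*z - a*t)]

lemma aux_pow (n : ℕ) (hn : 1 ≤ n) (s a : ℝ) (hs : 0 < s) (ha : 0 < a) :
    (a/s) * (a/Real.sqrt s)^(n-1) = a^n * s ^ (-(((n:ℝ)+1)/2)) := by
  have hsqrt : (0:ℝ) < Real.sqrt s := Real.sqrt_pos.mpr hs
  have h1 : (Real.sqrt s)^(n-1) = s ^ (((n:ℝ)-1)/2) := by
    rw [show Real.sqrt s = s ^ ((1:ℝ)/2) from Real.sqrt_eq_rpow s,
      ← Real.rpow_natCast (s ^ ((1:ℝ)/2)) (n-1), ← Real.rpow_mul hs.le]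
    congr 1
    rw [Nat.cast_sub hn]
    push_cast
    ring
  have h2 : a^n = a * a^(n-1) := by
    rw [← pow_succ']
    congr 1
    omega
  rw [div_pow, h1, h2]
  have h3 : s ^ (-(((n:ℝ)+1)/2)) = (s * s ^ (((n:ℝ)-1)/2))⁻¹ := by
    rw [Real.rpow_neg hs.le]
    congr 1
    rw [show s * s ^ (((n:ℝ)-1)/2) = s ^ ((1:ℝ)) * s ^ (((n:ℝ)-1)/2) by rw [Real.rpow_one],
      ← Real.rpow_add hs]
    congr 1
    ring
  rw [h3]
  have hsp : (0:ℝ) < s ^ (((n:ℝ)-1)/2) := Real.rpow_pos_of_pos hs _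
  field_simp

/-- **Volume of the backward metric ball** of the Randers metric `F(y) = ‖y‖ + t yₙ` on
`ℝⁿ` (`0 ≤ t < 1`): for `a > 0`, the Lebesgue measure of `{ρ₋ < a}`, where
`ρ₋(x) = ‖x‖ − t xₙ`, equals `ωₙ aⁿ (1−t²)^{−(n+1)/2}`, with `ωₙ` the Lebesgue measure
of the Euclidean unit ball. -/
theorem stmt_15 (n : ℕ) (hn : 1 ≤ n) (t a : ℝ) (ht0 : 0 ≤ t) (ht1 : t < 1) (ha : 0 < a)
    (ρm : EuclideanSpace ℝ (Fin n) → ℝ)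
    (hρm : ∀ x : EuclideanSpace ℝ (Fin n), ρm x = ‖x‖ - t * x ⟨n - 1, by omega⟩) :
    (volume {x : EuclideanSpace ℝ (Fin n) | ρm x < a}).toReal =
      (volume (Metric.ball (0 : EuclideanSpace ℝ (Fin n)) 1)).toReal * a ^ n *
        (1 - t ^ 2) ^ (-(((n : ℝ) + 1) / 2)) := by
  have hs : 0 < 1 - t^2 := by nlinarith
  have hsqrt : (0:ℝ) < Real.sqrt (1-t^2) := Real.sqrt_pos.mpr hs
  set m : Fin n := ⟨n - 1, by omega⟩ with hm
  set c : Fin n → ℝ := fun i => if i = m then a/(1-t^2) else a/Real.sqrt (1-t^2) with hc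
  set v : EuclideanSpace ℝ (Fin n) := EuclideanSpace.single m (a*t/(1-t^2)) with hv
  set bwd : EuclideanSpace ℝ (Fin n) → EuclideanSpace ℝ (Fin n) := fun x =>
    (WithLp.equiv 2 (Fin n → ℝ)).symm fun i =>
      if i = m then (x m - a*t/(1-t^2))*((1-t^2)/a) else x i * (Real.sqrt (1-t^2)/a)
    with hbwd
  have hbwd_apply : ∀ (x : EuclideanSpace ℝ (Fin n)) (i : Fin n),
      bwd x i = if i = m then (x m - a*t/(1-t^2))*((1-t^2)/a)
        else x i * (Real.sqrt (1-t^2)/a) := by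
    intro x i; rfl
  have hnorm : ∀ y : EuclideanSpace ℝ (Fin n), ‖y‖ = Real.sqrt (∑ i, (y i)^2) := by
    intro y; rw [EuclideanSpace.norm_eq]; simp [sq_abs]
  -- the key pointwise equivalence
  have key : ∀ x : EuclideanSpace ℝ (Fin n), (‖x‖ - t * x m < a) ↔ ‖bwd x‖ < 1 := by
    intro x
    set A : ℝ := ∑ i ∈ Finset.univ.erase m, (x i)^2 with hA_def
    have hA : 0 ≤ A := Finset.sum_nonneg fun i _ => sq_nonneg _
    have hx : ‖x‖ = Real.sqrt ((x m)^2 + A) := by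
      rw [hnorm x]; congr 1
      rw [← Finset.add_sum_erase _ _ (Finset.mem_univ m)]
    have hb : ‖bwd x‖ = Real.sqrt (((x m - a*t/(1-t^2))*((1-t^2)/a))^2 + A * ((1-t^2)/a^2)) := by
      rw [hnorm (bwd x), ← Finset.add_sum_erase _ _ (Finset.mem_univ m)]
      congr 2
      · rw [hbwd_apply, if_pos rfl]
      · rw [hA_def, Finset.sum_mul]
        refine Finset.sum_congr rfl fun i hi => ?_
        rw [hbwd_apply, if_neg (Finset.ne_of_mem_erase hi), mul_pow, div_pow,
          Real.sq_sqrt hs.le]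
    rw [hx, hb, sub_lt_iff_lt_add']
    have h1 : Real.sqrt (((x m - a*t/(1-t^2))*((1-t^2)/a))^2 + A * ((1-t^2)/a^2)) < 1 ↔
        ((x m - a*t/(1-t^2))*((1-t^2)/a))^2 + A * ((1-t^2)/a^2) < 1 := by
      rw [Real.sqrt_lt' one_pos, one_pow]
    rw [h1, show t * x m + a = a + t * x m from add_comm _ _]
    exact aux_key t a (x m) A ht0 ht1 ha hA
  -- the set is the affine image of the unit ball
  have hcm : ∀ i : Fin n, c i ≠ 0 := by
    intro i; rw [hc]; dsimp only
    split <;> positivity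
  have hset : {x : EuclideanSpace ℝ (Fin n) | ρm x < a} =
      (fun u => diagMap n c u + v) '' Metric.ball 0 1 := by
    ext x
    simp only [Set.mem_setOf_eq, hρm, Set.mem_image, Metric.mem_ball, dist_zero_right]
    constructor
    · intro h
      refine ⟨bwd x, (key x).mp h, ?_⟩
      ext i
      show diagMap n c (bwd x) i + v i = x i
      rw [diagMap_apply, hbwd_apply]
      by_cases him : i = m
      · subst him
        rw [if_pos rfl, hc]
        simp only [if_pos rfl, hv, EuclideanSpace.single_apply, if_pos rfl, ↓reduceIte]
        field_simp
        ring
      · rw [if_neg him, hc]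
        simp only [if_neg him, hv, EuclideanSpace.single_apply, if_neg him]
        field_simp
        ring
    · rintro ⟨u, hu, rfl⟩
      have hub : bwd (diagMap n c u + v) = u := by
        ext i
        rw [hbwd_apply]
        have happ : ∀ j : Fin n, (diagMap n c u + v) j = c j * u j + v j := by
          intro j; show diagMap n c u j + v j = _; rw [diagMap_apply]
        by_cases him : i = m
        · subst him
          rw [if_pos rfl, happ, hc]
          simp only [if_pos rfl, hv, EuclideanSpace.single_apply, if_pos rfl, ↓reduceIte]
          field_simp
          ring
        · rw [if_neg him, happ, hc]
          simp only [if_neg him, hv, EuclideanSpace.single_apply, if_neg him]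
          field_simp
          ring
      have := (key (diagMap n c u + v)).mpr (by rw [hub]; exact hu)
      exact this
  rw [hset]
  have himg : (fun u => diagMap n c u + v) '' Metric.ball 0 1 =
      (fun x => x + v) '' (diagMap n c '' Metric.ball 0 1) := by
    rw [← Set.image_comp]; rfl
  rw [himg, vol_image_add, Measure.addHaar_image_linearMap, diagMap_det]
  have hprod : ∏ i, c i = (a/(1-t^2)) * (a/Real.sqrt (1-t^2))^(n-1) := by
    rw [← Finset.mul_prod_erase _ _ (Finset.mem_univ m)]
    have h1 : c m = a/(1-t^2) := by simp [hc]
    have h2 : ∏ i ∈ Finset.univ.erase m, c i = (a/Real.sqrt (1-t^2))^(n-1) := by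
      rw [Finset.prod_congr rfl (fun i hi => show c i = a/Real.sqrt (1-t^2) by
        simp [hc, Finset.ne_of_mem_erase hi]),
        Finset.prod_const, Finset.card_erase_of_mem (Finset.mem_univ m),
        Finset.card_univ, Fintype.card_fin]
    rw [h1, h2]
  have hdetval : ∏ i, c i = a^n * (1-t^2) ^ (-(((n:ℝ)+1)/2)) := by
    rw [hprod]; exact aux_pow n hn (1-t^2) a hs ha
  have hdetpos : 0 < ∏ i, c i := by
    rw [hprod]; positivity
  rw [abs_of_pos hdetpos, hdetval, ENNReal.toReal_mul, ENNReal.toReal_ofReal (by positivity)]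
  ring
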